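/- Let J ≥ 0 and let {I_j^x}_{j=0}^J and {I_j^y}_{j=0}^J be hierarchical partitions (up to level J) of the unit interval [0,1]. Define B_j = I_j^x ⊗ I_j^y = {I^x × I^y : I^x ∈ I_j^x, I^y ∈ I_j^y} for j = 0,…,J. Then the cut-off system X({B_j}_{j=0}^J) = {φ_0} ∪ ∪_{j=0}^{J−1} ∪_{B∈B_j} Ψ_{j,B} is a tight frame (with frame constant 1) for V_J = span{χ_B : B ∈ B_J} ⊆ L²([0,1]²): for every f ∈ V_J, ‖f‖² = |⟨f, φ_0⟩|² + Σ_{j=0}^{J−1} Σ_{B∈B_j} Σ_{1≤ℓ_1<ℓ_2≤c_B} |⟨f, ψ_{j,B}^{(ℓ_1,ℓ_2)}⟩|². -/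

import Mathlib

open MeasureTheory

/-- A hierarchical partition of the unit interval `[0,1]` up to level `J`: a finite sequence
of finite collections of subintervals of `[0,1]` of positive length with pairwise null
intersections whose union is `[0,1]`, starting with `{[0,1]}`, where every interval at level
`j < J` is the (enumerated) union of its children intervals at level `j+1`. -/
structure IntervalPartitionUpTo (J : ℕ) where
  part : ℕ → Finset (Set ℝ)
  root : part 0 = {Set.Icc (0 : ℝ) 1}
  subinterval : ∀ j ≤ J, ∀ B ∈ part j,
    B ⊆ Set.Icc (0 : ℝ) 1 ∧ B.OrdConnected ∧ MeasurableSet B ∧ 0 < volume B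
  cover : ∀ j ≤ J, ⋃ B ∈ part j, B = Set.Icc (0 : ℝ) 1
  null_inter : ∀ j ≤ J, ∀ B ∈ part j, ∀ B' ∈ part j, B ≠ B' → volume (B ∩ B') = 0
  numChild : ℕ → Set ℝ → ℕ
  child : ℕ → Set ℝ → ℕ → Set ℝ
  one_le_numChild : ∀ j < J, ∀ B ∈ part j, 1 ≤ numChild j B
  child_mem : ∀ j < J, ∀ B ∈ part j, ∀ ℓ < numChild j B, child j B ℓ ∈ part (j + 1)
  child_ne : ∀ j < J, ∀ B ∈ part j, ∀ ℓ₁ < numChild j B, ∀ ℓ₂ < numChild j B,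
    ℓ₁ ≠ ℓ₂ → child j B ℓ₁ ≠ child j B ℓ₂
  child_union : ∀ j < J, ∀ B ∈ part j, B = ⋃ ℓ ∈ Finset.range (numChild j B), child j B ℓ

/-- `γ_C = χ_C / √|C|` on the plane. -/
noncomputable def gammaFn (C : Set (ℝ × ℝ)) : ℝ × ℝ → ℝ :=
  C.indicator fun _ => (Real.sqrt (volume C).toReal)⁻¹

/-- `ψ^{(C,C')} = √(|C'|/|B|) γ_C − √(|C|/|B|) γ_{C'}` for sub-blocks `C, C'` of `B`. -/
noncomputable def psiFn (B C C' : Set (ℝ × ℝ)) : ℝ × ℝ → ℝ :=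
  fun x =>
    Real.sqrt ((volume C').toReal / (volume B).toReal) * gammaFn C x -
      Real.sqrt ((volume C).toReal / (volume B).toReal) * gammaFn C' x

/-- The `ℓ`-th child (in the product enumeration) of the product block `Bx × By` at level
`j`: the product of the `(ℓ / c_y)`-th child of `Bx` and the `(ℓ % c_y)`-th child of `By`. -/
def prodChild {J : ℕ} (Px Py : IntervalPartitionUpTo J) (j : ℕ) (Bx By : Set ℝ) (ℓ : ℕ) :
    Set (ℝ × ℝ) :=
  Px.child j Bx (ℓ / Py.numChild j By) ×ˢ Py.child j By (ℓ % Py.numChild j By)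

namespace TFAux

/-- The unit square. -/
abbrev Sq : Set (ℝ × ℝ) := Set.Icc (0 : ℝ) 1 ×ˢ Set.Icc (0 : ℝ) 1

/-- Lebesgue measure restricted to the unit square. -/
noncomputable abbrev μ2 : Measure (ℝ × ℝ) := volume.restrict Sq

lemma vol_prod (s t : Set ℝ) : volume (s ×ˢ t) = volume s * volume t := by
  rw [MeasureTheory.Measure.volume_eq_prod, Measure.prod_prod]

lemma vol_Sq : volume Sq = 1 := by
  rw [vol_prod]; simp

instance : IsFiniteMeasure μ2 := by
  constructor
  rw [Measure.restrict_apply_univ, vol_Sq]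
  exact ENNReal.one_lt_top

/-- A "good" block: measurable, positive finite volume, inside the unit square. -/
structure Good (C : Set (ℝ × ℝ)) : Prop where
  meas : MeasurableSet C
  pos : 0 < volume C
  sub : C ⊆ Sq

lemma Good.lt_top {C : Set (ℝ × ℝ)} (h : Good C) : volume C < ⊤ :=
  lt_of_le_of_lt (le_trans (measure_mono h.sub) (le_of_eq vol_Sq)) ENNReal.one_lt_top

lemma Good.toReal_pos {C : Set (ℝ × ℝ)} (h : Good C) : 0 < (volume C).toReal :=
  ENNReal.toReal_pos h.pos.ne' h.lt_top.ne

lemma Good.mu2_eq {C : Set (ℝ × ℝ)} (h : Good C) : μ2 C = volume C := by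
  rw [Measure.restrict_apply h.meas, Set.inter_eq_self_of_subset_left h.sub]

section Coef

variable (f : Lp ℝ 2 μ2)

/-- `∫ f χ_C`. -/
noncomputable def coefI (C : Set (ℝ × ℝ)) : ℝ :=
  ∫ x, f x * C.indicator (fun _ => (1 : ℝ)) x ∂μ2

/-- `∫ f γ_C`. -/
noncomputable def coefA (C : Set (ℝ × ℝ)) : ℝ :=
  ∫ x, f x * gammaFn C x ∂μ2

lemma integrable_mul_indicator {C : Set (ℝ × ℝ)} (hC : MeasurableSet C) (c : ℝ) :
    Integrable (fun x => f x * C.indicator (fun _ => c) x) μ2 := by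
  have hfi : Integrable (fun x => f x) μ2 := (Lp.memLp f).integrable one_le_two
  have := Integrable.bdd_mul (f := fun x => C.indicator (fun _ => c) x) hfi
    (c := ‖c‖) ((aestronglyMeasurable_const).indicator hC)
    (Filter.Eventually.of_forall fun x => norm_indicator_le_norm_self _ x)
  simpa [mul_comm] using this

lemma integrable_mul_gamma {C : Set (ℝ × ℝ)} (hC : MeasurableSet C) :
    Integrable (fun x => f x * gammaFn C x) μ2 :=
  integrable_mul_indicator f hC _

lemma gammaFn_eq (C : Set (ℝ × ℝ)) (x : ℝ × ℝ) :
    gammaFn C x = (Real.sqrt (volume C).toReal)⁻¹ * C.indicator (fun _ => (1 : ℝ)) x := by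
  classical
  by_cases hx : x ∈ C <;> simp [gammaFn, Set.indicator_apply, hx]

lemma coefA_eq (C : Set (ℝ × ℝ)) :
    coefA f C = (Real.sqrt (volume C).toReal)⁻¹ * coefI f C := by
  unfold coefA coefI
  rw [← MeasureTheory.integral_const_mul]
  congr 1
  funext x
  rw [gammaFn_eq]
  ring

lemma coefA_add (g h : Lp ℝ 2 μ2) {C : Set (ℝ × ℝ)} (hC : MeasurableSet C) :
    coefA (g + h) C = coefA g C + coefA h C := by
  unfold coefA
  rw [← MeasureTheory.integral_add (integrable_mul_gamma g hC) (integrable_mul_gamma h hC)]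
  refine MeasureTheory.integral_congr_ae ?_
  filter_upwards [Lp.coeFn_add g h] with x hx
  rw [hx, Pi.add_apply, add_mul]

lemma coefA_smul (c : ℝ) (g : Lp ℝ 2 μ2) (C : Set (ℝ × ℝ)) :
    coefA (c • g) C = c * coefA g C := by
  unfold coefA
  rw [← MeasureTheory.integral_const_mul]
  refine MeasureTheory.integral_congr_ae ?_
  filter_upwards [Lp.coeFn_smul c g] with x hx
  rw [hx, Pi.smul_apply, smul_eq_mul]
  ring

lemma coefA_zero (C : Set (ℝ × ℝ)) : coefA (0 : Lp ℝ 2 μ2) C = 0 := by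
  unfold coefA
  have h : (fun x => (0 : Lp ℝ 2 μ2) x * gammaFn C x) =ᵐ[μ2] fun _ => (0 : ℝ) := by
    filter_upwards [Lp.coeFn_zero ℝ 2 μ2] with x hx
    rw [hx]
    simp

  rw [MeasureTheory.integral_congr_ae h, integral_zero]

end Coef

/-- a.e. the indicator of an almost-disjoint union is the sum of the indicators. -/
lemma indicator_sum_ae {ι : Type*} (s : Finset ι) (C : ι → Set (ℝ × ℝ))
    (hnull : ∀ i ∈ s, ∀ j ∈ s, i ≠ j → volume (C i ∩ C j) = 0) :
    (fun x => (⋃ i ∈ s, C i).indicator (fun _ => (1 : ℝ)) x)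
      =ᵐ[volume] fun x => ∑ i ∈ s, (C i).indicator (fun _ => (1 : ℝ)) x := by
  classical
  have hN : volume (⋃ p ∈ (s ×ˢ s).filter fun p : ι × ι => p.1 ≠ p.2, (C p.1 ∩ C p.2)) = 0 := by
    refine le_antisymm (le_trans (measure_biUnion_finset_le _ _) (le_of_eq ?_)) zero_le
    refine Finset.sum_eq_zero fun p hp => ?_
    rw [Finset.mem_filter, Finset.mem_product] at hp
    exact hnull p.1 hp.1.1 p.2 hp.1.2 hp.2
  rw [← MeasureTheory.compl_mem_ae_iff] at hN
  filter_upwards [hN] with x hx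
  by_cases hx1 : x ∈ ⋃ i ∈ s, C i
  · obtain ⟨i₀, hi₀, hxi₀⟩ := Set.mem_iUnion₂.mp hx1
    rw [Set.indicator_of_mem hx1]
    rw [Finset.sum_eq_single i₀]
    · rw [Set.indicator_of_mem hxi₀]
    · intro i hi hne
      rw [Set.indicator_apply_eq_zero]
      intro hxi
      exfalso
      apply hx
      exact Set.mem_iUnion₂.mpr ⟨(i, i₀), Finset.mem_filter.mpr
        ⟨Finset.mem_product.mpr ⟨hi, hi₀⟩, hne⟩, ⟨hxi, hxi₀⟩⟩
    · intro h; exact absurd hi₀ h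
  · rw [Set.indicator_of_notMem hx1]
    refine (Finset.sum_eq_zero fun i hi => ?_).symm
    rw [Set.indicator_apply_eq_zero]
    intro hxi
    exact absurd (Set.mem_iUnion₂.mpr ⟨i, hi, hxi⟩) hx1

lemma coefI_biUnion (f : Lp ℝ 2 μ2) {ι : Type*} (s : Finset ι) (C : ι → Set (ℝ × ℝ))
    (hmeas : ∀ i ∈ s, MeasurableSet (C i))
    (hnull : ∀ i ∈ s, ∀ j ∈ s, i ≠ j → volume (C i ∩ C j) = 0) :
    coefI f (⋃ i ∈ s, C i) = ∑ i ∈ s, coefI f (C i) := by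
  have hle : (μ2 : Measure (ℝ × ℝ)) ≤ volume := Measure.restrict_le_self
  have hae : (fun x => (⋃ i ∈ s, C i).indicator (fun _ => (1 : ℝ)) x)
      =ᵐ[μ2] fun x => ∑ i ∈ s, (C i).indicator (fun _ => (1 : ℝ)) x :=
    (indicator_sum_ae s C hnull).filter_mono (ae_mono hle)
  unfold coefI
  rw [MeasureTheory.integral_congr_ae (g := fun x => ∑ i ∈ s, f x * (C i).indicator (fun _ => (1:ℝ)) x)
    (by filter_upwards [hae] with x hx; rw [hx, Finset.mul_sum])]
  exact integral_finset_sum s fun i hi => integrable_mul_indicator f (hmeas i hi) 1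

/-- Lagrange's identity. -/
lemma lagrange (n : ℕ) (u a : ℕ → ℝ) :
    ∑ ℓ₂ ∈ Finset.range n, ∑ ℓ₁ ∈ Finset.range ℓ₂, (u ℓ₂ * a ℓ₁ - u ℓ₁ * a ℓ₂) ^ 2 =
      (∑ ℓ ∈ Finset.range n, u ℓ ^ 2) * (∑ ℓ ∈ Finset.range n, a ℓ ^ 2) -
        (∑ ℓ ∈ Finset.range n, u ℓ * a ℓ) ^ 2 := by
  induction n with
  | zero => simp
  | succ n ih =>
    rw [Finset.sum_range_succ, ih, Finset.sum_range_succ (f := fun ℓ => u ℓ ^ 2),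
      Finset.sum_range_succ (f := fun ℓ => a ℓ ^ 2), Finset.sum_range_succ (f := fun ℓ => u ℓ * a ℓ)]
    have h : ∑ ℓ₁ ∈ Finset.range n, (u n * a ℓ₁ - u ℓ₁ * a n) ^ 2 =
        u n ^ 2 * (∑ ℓ ∈ Finset.range n, a ℓ ^ 2) +
          a n ^ 2 * (∑ ℓ ∈ Finset.range n, u ℓ ^ 2) -
            2 * (u n * a n) * (∑ ℓ ∈ Finset.range n, u ℓ * a ℓ) := by
      rw [Finset.mul_sum, Finset.mul_sum, Finset.mul_sum, ← Finset.sum_add_distrib,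
        ← Finset.sum_sub_distrib]
      exact Finset.sum_congr rfl fun ℓ _ => by ring
    rw [h]
    ring

/-- div/mod reindexing of a sum over `range (cx * cy)`. -/
lemma sum_range_mul_divmod {M : Type*} [AddCommMonoid M] (cx cy : ℕ) (F : ℕ → ℕ → M) :
    ∑ ℓ ∈ Finset.range (cx * cy), F (ℓ / cy) (ℓ % cy) =
      ∑ i ∈ Finset.range cx, ∑ k ∈ Finset.range cy, F i k := by
  rcases Nat.eq_zero_or_pos cy with hcy | hcy
  · simp [hcy]
  rw [← Finset.sum_product (Finset.range cx) (Finset.range cy) (fun p => F p.1 p.2)]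
  refine Finset.sum_nbij' (fun ℓ => (ℓ / cy, ℓ % cy)) (fun p => p.1 * cy + p.2) ?_ ?_ ?_ ?_ ?_
  · intro ℓ hℓ
    rw [Finset.mem_range] at hℓ
    rw [Finset.mem_product, Finset.mem_range, Finset.mem_range]
    exact ⟨(Nat.div_lt_iff_lt_mul hcy).mpr hℓ, Nat.mod_lt _ hcy⟩
  · intro p hp
    rw [Finset.mem_product, Finset.mem_range, Finset.mem_range] at hp
    rw [Finset.mem_range]
    calc p.1 * cy + p.2 < p.1 * cy + cy := by omega
    _ = (p.1 + 1) * cy := by ring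
    _ ≤ cx * cy := Nat.mul_le_mul_right cy hp.1
  · intro ℓ _
    show ℓ / cy * cy + ℓ % cy = ℓ
    rw [mul_comm]
    exact Nat.div_add_mod ℓ cy
  · intro p hp
    rw [Finset.mem_product, Finset.mem_range, Finset.mem_range] at hp
    have h1 : (p.1 * cy + p.2) / cy = p.1 := by
      rw [mul_comm, Nat.mul_add_div hcy, Nat.div_eq_of_lt hp.2, add_zero]
    have h2 : (p.1 * cy + p.2) % cy = p.2 := by
      rw [mul_comm, Nat.mul_add_mod, Nat.mod_eq_of_lt hp.2]
    show ((p.1 * cy + p.2) / cy, (p.1 * cy + p.2) % cy) = p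
    rw [h1, h2]
  · intro ℓ _
    rfl

section OneD

variable {J : ℕ} (P : IntervalPartitionUpTo J)

lemma child_subset {j : ℕ} (hj : j < J) {B : Set ℝ} (hB : B ∈ P.part j) {i : ℕ}
    (hi : i < P.numChild j B) : P.child j B i ⊆ B := by
  intro y hy
  rw [P.child_union j hj B hB]
  exact Set.mem_iUnion₂.mpr ⟨i, Finset.mem_range.mpr hi, hy⟩

lemma child_good {j : ℕ} (hj : j < J) {B : Set ℝ} (hB : B ∈ P.part j) {i : ℕ}
    (hi : i < P.numChild j B) :
    MeasurableSet (P.child j B i) ∧ 0 < volume (P.child j B i)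
      ∧ P.child j B i ⊆ Set.Icc (0 : ℝ) 1 := by
  have hmem := P.child_mem j hj B hB i hi
  have h := P.subinterval (j + 1) hj _ hmem
  exact ⟨h.2.2.1, h.2.2.2, h.1⟩

lemma sum_child_volume {j : ℕ} (hj : j < J) {B : Set ℝ} (hB : B ∈ P.part j) :
    ∑ i ∈ Finset.range (P.numChild j B), volume (P.child j B i) = volume B := by
  conv_rhs => rw [P.child_union j hj B hB]
  refine (measure_biUnion_finset₀ ?_ ?_).symm
  · intro i hi k hk hne
    rw [Finset.mem_coe, Finset.mem_range] at hi hk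
    exact P.null_inter (j + 1) hj (P.child j B i) (P.child_mem j hj B hB i hi)
      (P.child j B k) (P.child_mem j hj B hB k hk) (P.child_ne j hj B hB i hi k hk hne)
  · intro i hi
    rw [Finset.mem_range] at hi
    exact (child_good P hj hB hi).1.nullMeasurableSet

/-- Reindexing a sum over children of all level-`j` intervals as a sum over level-`j+1`. -/
lemma sum_children {M : Type*} [AddCommMonoid M] {j : ℕ} (hj : j < J) (g : Set ℝ → M) :
    ∑ B ∈ P.part j, ∑ i ∈ Finset.range (P.numChild j B), g (P.child j B i) =
      ∑ B' ∈ P.part (j + 1), g B' := by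
  classical
  rw [← Finset.sum_sigma (P.part j) (fun B => Finset.range (P.numChild j B))
    (fun p => g (P.child j p.1 p.2))]
  refine Finset.sum_bij (fun p _ => P.child j p.1 p.2) ?_ ?_ ?_ ?_
  · rintro ⟨B, i⟩ hp
    rw [Finset.mem_sigma, Finset.mem_range] at hp
    exact P.child_mem j hj B hp.1 i hp.2
  · rintro ⟨B₁, i₁⟩ hp₁ ⟨B₂, i₂⟩ hp₂ h
    have h' : P.child j B₁ i₁ = P.child j B₂ i₂ := h
    rw [Finset.mem_sigma, Finset.mem_range] at hp₁ hp₂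
    by_cases hB : B₁ = B₂
    · subst hB
      by_cases hi : i₁ = i₂
      · subst hi; rfl
      · exact absurd h' (P.child_ne j hj B₁ hp₁.1 i₁ hp₁.2 i₂ hp₂.2 hi)
    · exfalso
      have hsub₁ : P.child j B₁ i₁ ⊆ B₁ := child_subset P hj hp₁.1 hp₁.2
      have hsub₂ : P.child j B₁ i₁ ⊆ B₂ := h' ▸ child_subset P hj hp₂.1 hp₂.2
      have hpos : 0 < volume (P.child j B₁ i₁) :=
        (child_good P hj hp₁.1 hp₁.2).2.1
      have hnull := P.null_inter j hj.le B₁ hp₁.1 B₂ hp₂.1 hB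
      have : volume (P.child j B₁ i₁) ≤ volume (B₁ ∩ B₂) :=
        measure_mono (Set.subset_inter hsub₁ hsub₂)
      rw [hnull] at this
      exact absurd (le_antisymm this zero_le) hpos.ne'
  · intro b hb
    by_contra hcon
    push_neg at hcon
    have hbpos : 0 < volume b := (P.subinterval (j + 1) hj b hb).2.2.2
    have hbsub : b ⊆ Set.Icc (0 : ℝ) 1 := (P.subinterval (j + 1) hj b hb).1
    have hsub : b ⊆ ⋃ B ∈ P.part j, ⋃ i ∈ Finset.range (P.numChild j B),
        (b ∩ P.child j B i) := by
      intro y hy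
      have hy1 : y ∈ ⋃ B ∈ P.part j, B := (P.cover j hj.le).symm ▸ hbsub hy
      obtain ⟨B, hB, hyB⟩ := Set.mem_iUnion₂.mp hy1
      rw [P.child_union j hj B hB] at hyB
      obtain ⟨i, hi, hyc⟩ := Set.mem_iUnion₂.mp hyB
      exact Set.mem_iUnion₂.mpr ⟨B, hB, Set.mem_iUnion₂.mpr ⟨i, hi, ⟨hy, hyc⟩⟩⟩
    have hle : volume b ≤ ∑ B ∈ P.part j, ∑ i ∈ Finset.range (P.numChild j B),
        volume (b ∩ P.child j B i) := by
      refine le_trans (measure_mono hsub) ?_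
      refine le_trans (measure_biUnion_finset_le _ _) ?_
      exact Finset.sum_le_sum fun B hB => measure_biUnion_finset_le _ _
    have hzero : ∑ B ∈ P.part j, ∑ i ∈ Finset.range (P.numChild j B),
        volume (b ∩ P.child j B i) = 0 := by
      refine Finset.sum_eq_zero fun B hB => Finset.sum_eq_zero fun i hi => ?_
      rw [Finset.mem_range] at hi
      have hne : b ≠ P.child j B i := by
        intro h
        exact hcon ⟨B, i⟩ (Finset.mem_sigma.mpr ⟨hB, Finset.mem_range.mpr hi⟩) h.symm
      exact P.null_inter (j + 1) hj b hb (P.child j B i) (P.child_mem j hj B hB i hi) hne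
    rw [hzero] at hle
    exact absurd (le_antisymm hle zero_le) hbpos.ne'
  · intro p _
    rfl

end OneD

section TwoD

variable {J : ℕ} (Px Py : IntervalPartitionUpTo J) (f : Lp ℝ 2 μ2)
variable {j : ℕ} {Bx By : Set ℝ}

lemma good_block {j : ℕ} (hj : j ≤ J) (hBx : Bx ∈ Px.part j) (hBy : By ∈ Py.part j) :
    Good (Bx ×ˢ By) := by
  have hx := Px.subinterval j hj Bx hBx
  have hy := Py.subinterval j hj By hBy
  refine ⟨hx.2.2.1.prod hy.2.2.1, ?_, Set.prod_mono hx.1 hy.1⟩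
  rw [vol_prod]
  exact ENNReal.mul_pos hx.2.2.2.ne' hy.2.2.2.ne'

lemma prodChild_good (hj : j < J) (hBx : Bx ∈ Px.part j) (hBy : By ∈ Py.part j)
    {ℓ : ℕ} (hℓ : ℓ < Px.numChild j Bx * Py.numChild j By) :
    Good (prodChild Px Py j Bx By ℓ) := by
  have hcy : 0 < Py.numChild j By := by
    rcases Nat.eq_zero_or_pos (Py.numChild j By) with h | h
    · rw [h, mul_zero] at hℓ; exact absurd hℓ (Nat.not_lt_zero ℓ)
    · exact h
  have hdiv : ℓ / Py.numChild j By < Px.numChild j Bx := (Nat.div_lt_iff_lt_mul hcy).mpr hℓ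
  have hmod : ℓ % Py.numChild j By < Py.numChild j By := Nat.mod_lt _ hcy
  exact good_block Px Py (Nat.succ_le_of_lt hj)
    (Px.child_mem j hj Bx hBx _ hdiv) (Py.child_mem j hj By hBy _ hmod)

lemma prodChild_null_inter (hj : j < J) (hBx : Bx ∈ Px.part j) (hBy : By ∈ Py.part j)
    {ℓ ℓ' : ℕ} (hℓ : ℓ < Px.numChild j Bx * Py.numChild j By)
    (hℓ' : ℓ' < Px.numChild j Bx * Py.numChild j By) (hne : ℓ ≠ ℓ') :
    volume (prodChild Px Py j Bx By ℓ ∩ prodChild Px Py j Bx By ℓ') = 0 := by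
  have hcy : 0 < Py.numChild j By := by
    rcases Nat.eq_zero_or_pos (Py.numChild j By) with h | h
    · rw [h, mul_zero] at hℓ; exact absurd hℓ (Nat.not_lt_zero ℓ)
    · exact h
  have hdiv : ℓ / Py.numChild j By < Px.numChild j Bx := (Nat.div_lt_iff_lt_mul hcy).mpr hℓ
  have hdiv' : ℓ' / Py.numChild j By < Px.numChild j Bx := (Nat.div_lt_iff_lt_mul hcy).mpr hℓ'
  have hmod : ℓ % Py.numChild j By < Py.numChild j By := Nat.mod_lt _ hcy
  have hmod' : ℓ' % Py.numChild j By < Py.numChild j By := Nat.mod_lt _ hcy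
  unfold prodChild
  rw [Set.prod_inter_prod, vol_prod]
  by_cases hd : ℓ / Py.numChild j By = ℓ' / Py.numChild j By
  · have hm : ℓ % Py.numChild j By ≠ ℓ' % Py.numChild j By := by
      intro hm
      apply hne
      have e1 := Nat.div_add_mod ℓ (Py.numChild j By)
      have e2 := Nat.div_add_mod ℓ' (Py.numChild j By)
      rw [hd, hm] at e1
      omega
    have := Py.null_inter (j + 1) hj (Py.child j By (ℓ % Py.numChild j By))
      (Py.child_mem j hj By hBy _ hmod) (Py.child j By (ℓ' % Py.numChild j By))
      (Py.child_mem j hj By hBy _ hmod')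
      (Py.child_ne j hj By hBy _ hmod _ hmod' hm)
    rw [this, mul_zero]
  · have := Px.null_inter (j + 1) hj (Px.child j Bx (ℓ / Py.numChild j By))
      (Px.child_mem j hj Bx hBx _ hdiv) (Px.child j Bx (ℓ' / Py.numChild j By))
      (Px.child_mem j hj Bx hBx _ hdiv')
      (Px.child_ne j hj Bx hBx _ hdiv _ hdiv' hd)
    rw [this, zero_mul]

lemma prodChild_biUnion (hj : j < J) (hBx : Bx ∈ Px.part j) (hBy : By ∈ Py.part j) :
    Bx ×ˢ By = ⋃ ℓ ∈ Finset.range (Px.numChild j Bx * Py.numChild j By),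
      prodChild Px Py j Bx By ℓ := by
  set cx := Px.numChild j Bx with hcx
  set cy := Py.numChild j By with hcydef
  apply Set.Subset.antisymm
  · rintro ⟨x1, x2⟩ hx
    obtain ⟨hx1, hx2⟩ := hx
    have hx1' : x1 ∈ ⋃ i ∈ Finset.range cx, Px.child j Bx i := by
      rw [← Px.child_union j hj Bx hBx]; exact hx1
    have hx2' : x2 ∈ ⋃ k ∈ Finset.range cy, Py.child j By k := by
      rw [← Py.child_union j hj By hBy]; exact hx2
    obtain ⟨i, hi, hxi⟩ := Set.mem_iUnion₂.mp hx1'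
    obtain ⟨k, hk, hxk⟩ := Set.mem_iUnion₂.mp hx2'
    rw [Finset.mem_range] at hi hk
    refine Set.mem_iUnion₂.mpr ⟨i * cy + k, Finset.mem_range.mpr ?_, ?_⟩
    · calc i * cy + k < i * cy + cy := by omega
      _ = (i + 1) * cy := by ring
      _ ≤ cx * cy := Nat.mul_le_mul_right cy hi
    · have h1 : (i * cy + k) / cy = i := by
        have hcy : 0 < cy := by omega
        rw [mul_comm, Nat.mul_add_div hcy, Nat.div_eq_of_lt hk, add_zero]
      have h2 : (i * cy + k) % cy = k := by
        rw [mul_comm, Nat.mul_add_mod, Nat.mod_eq_of_lt hk]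
      show (x1, x2) ∈ Px.child j Bx ((i * cy + k) / cy) ×ˢ Py.child j By ((i * cy + k) % cy)
      rw [h1, h2]
      exact ⟨hxi, hxk⟩
  · refine Set.iUnion₂_subset fun ℓ hℓ => ?_
    rw [Finset.mem_range] at hℓ
    have hcy : 0 < cy := by
      rcases Nat.eq_zero_or_pos cy with h | h
      · rw [h, mul_zero] at hℓ; exact absurd hℓ (Nat.not_lt_zero ℓ)
      · exact h
    exact Set.prod_mono
      (child_subset Px hj hBx ((Nat.div_lt_iff_lt_mul hcy).mpr hℓ))
      (child_subset Py hj hBy (Nat.mod_lt _ hcy))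

lemma sum_prodChild_volume (hj : j < J) (hBx : Bx ∈ Px.part j) (hBy : By ∈ Py.part j) :
    ∑ ℓ ∈ Finset.range (Px.numChild j Bx * Py.numChild j By),
      volume (prodChild Px Py j Bx By ℓ) = volume (Bx ×ˢ By) := by
  have := sum_range_mul_divmod (Px.numChild j Bx) (Py.numChild j By)
    (fun i k => volume (Px.child j Bx i ×ˢ Py.child j By k))
  rw [show (∑ ℓ ∈ Finset.range (Px.numChild j Bx * Py.numChild j By),
      volume (prodChild Px Py j Bx By ℓ)) = ∑ ℓ ∈ Finset.range (Px.numChild j Bx * Py.numChild j By),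
      volume (Px.child j Bx (ℓ / Py.numChild j By) ×ˢ Py.child j By (ℓ % Py.numChild j By)) from rfl,
    this, vol_prod]
  calc ∑ i ∈ Finset.range (Px.numChild j Bx), ∑ k ∈ Finset.range (Py.numChild j By),
        volume (Px.child j Bx i ×ˢ Py.child j By k)
      = ∑ i ∈ Finset.range (Px.numChild j Bx), ∑ k ∈ Finset.range (Py.numChild j By),
        volume (Px.child j Bx i) * volume (Py.child j By k) := by
        refine Finset.sum_congr rfl fun i _ => Finset.sum_congr rfl fun k _ => vol_prod _ _
    _ = (∑ i ∈ Finset.range (Px.numChild j Bx), volume (Px.child j Bx i)) *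
        (∑ k ∈ Finset.range (Py.numChild j By), volume (Py.child j By k)) :=
        (Finset.sum_mul_sum _ _ _ _).symm
    _ = volume Bx * volume By := by
        rw [sum_child_volume Px hj hBx, sum_child_volume Py hj hBy]

/-- `Σ_ℓ b_ℓ = 1`. -/
lemma sum_b_eq_one (hj : j < J) (hBx : Bx ∈ Px.part j) (hBy : By ∈ Py.part j) :
    ∑ ℓ ∈ Finset.range (Px.numChild j Bx * Py.numChild j By),
      Real.sqrt ((volume (prodChild Px Py j Bx By ℓ)).toReal / (volume (Bx ×ˢ By)).toReal) ^ 2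
      = 1 := by
  have hB : Good (Bx ×ˢ By) := good_block Px Py hj.le hBx hBy
  have h1 : ∀ ℓ ∈ Finset.range (Px.numChild j Bx * Py.numChild j By),
      Real.sqrt ((volume (prodChild Px Py j Bx By ℓ)).toReal / (volume (Bx ×ˢ By)).toReal) ^ 2
      = (volume (prodChild Px Py j Bx By ℓ)).toReal / (volume (Bx ×ˢ By)).toReal := by
    intro ℓ _
    exact Real.sq_sqrt (div_nonneg ENNReal.toReal_nonneg ENNReal.toReal_nonneg)
  rw [Finset.sum_congr rfl h1, ← Finset.sum_div]
  have h2 : ∑ ℓ ∈ Finset.range (Px.numChild j Bx * Py.numChild j By),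
      (volume (prodChild Px Py j Bx By ℓ)).toReal = (volume (Bx ×ˢ By)).toReal := by
    rw [← ENNReal.toReal_sum, sum_prodChild_volume Px Py hj hBx hBy]
    intro ℓ hℓ
    rw [Finset.mem_range] at hℓ
    exact (prodChild_good Px Py hj hBx hBy hℓ).lt_top.ne
  rw [h2, div_self hB.toReal_pos.ne']

/-- `Σ_ℓ √b_ℓ a_ℓ = a_B`. -/
lemma sum_sqrtb_coefA (hj : j < J) (hBx : Bx ∈ Px.part j) (hBy : By ∈ Py.part j) :
    ∑ ℓ ∈ Finset.range (Px.numChild j Bx * Py.numChild j By),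
      Real.sqrt ((volume (prodChild Px Py j Bx By ℓ)).toReal / (volume (Bx ×ˢ By)).toReal) *
        coefA f (prodChild Px Py j Bx By ℓ)
      = coefA f (Bx ×ˢ By) := by
  have hB : Good (Bx ×ˢ By) := good_block Px Py hj.le hBx hBy
  have key : ∀ ℓ ∈ Finset.range (Px.numChild j Bx * Py.numChild j By),
      Real.sqrt ((volume (prodChild Px Py j Bx By ℓ)).toReal / (volume (Bx ×ˢ By)).toReal) *
        coefA f (prodChild Px Py j Bx By ℓ)
      = (Real.sqrt (volume (Bx ×ˢ By)).toReal)⁻¹ * coefI f (prodChild Px Py j Bx By ℓ) := by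
    intro ℓ hℓ
    rw [Finset.mem_range] at hℓ
    have hC : Good (prodChild Px Py j Bx By ℓ) := prodChild_good Px Py hj hBx hBy hℓ
    rw [coefA_eq, Real.sqrt_div ENNReal.toReal_nonneg]
    have h1 : Real.sqrt (volume (prodChild Px Py j Bx By ℓ)).toReal ≠ 0 :=
      (Real.sqrt_pos.mpr hC.toReal_pos).ne'
    have h2 : Real.sqrt (volume (Bx ×ˢ By)).toReal ≠ 0 :=
      (Real.sqrt_pos.mpr hB.toReal_pos).ne'
    field_simp
  rw [Finset.sum_congr rfl key, ← Finset.mul_sum]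
  have h3 : ∑ ℓ ∈ Finset.range (Px.numChild j Bx * Py.numChild j By),
      coefI f (prodChild Px Py j Bx By ℓ) = coefI f (Bx ×ˢ By) := by
    rw [show (Bx ×ˢ By : Set (ℝ × ℝ)) = ⋃ ℓ ∈ Finset.range (Px.numChild j Bx * Py.numChild j By),
        prodChild Px Py j Bx By ℓ from prodChild_biUnion Px Py hj hBx hBy]
    refine (coefI_biUnion f _ _ ?_ ?_).symm
    · intro ℓ hℓ
      rw [Finset.mem_range] at hℓ
      exact (prodChild_good Px Py hj hBx hBy hℓ).meas
    · intro ℓ hℓ ℓ' hℓ' hne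
      rw [Finset.mem_range] at hℓ hℓ'
      exact prodChild_null_inter Px Py hj hBx hBy hℓ hℓ' hne
  rw [h3, ← coefA_eq]

/-- The ψ-coefficient. -/
lemma coef_psi (hj : j < J) (hBx : Bx ∈ Px.part j) (hBy : By ∈ Py.part j)
    {ℓ₁ ℓ₂ : ℕ} (h₁ : ℓ₁ < Px.numChild j Bx * Py.numChild j By)
    (h₂ : ℓ₂ < Px.numChild j Bx * Py.numChild j By) :
    ∫ x, f x * psiFn (Bx ×ˢ By) (prodChild Px Py j Bx By ℓ₁) (prodChild Px Py j Bx By ℓ₂) x ∂μ2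
      = Real.sqrt ((volume (prodChild Px Py j Bx By ℓ₂)).toReal / (volume (Bx ×ˢ By)).toReal) *
          coefA f (prodChild Px Py j Bx By ℓ₁) -
        Real.sqrt ((volume (prodChild Px Py j Bx By ℓ₁)).toReal / (volume (Bx ×ˢ By)).toReal) *
          coefA f (prodChild Px Py j Bx By ℓ₂) := by
  have hm₁ : MeasurableSet (prodChild Px Py j Bx By ℓ₁) :=
    (prodChild_good Px Py hj hBx hBy h₁).meas
  have hm₂ : MeasurableSet (prodChild Px Py j Bx By ℓ₂) :=
    (prodChild_good Px Py hj hBx hBy h₂).meas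
  have heq : (fun x => f x *
      psiFn (Bx ×ˢ By) (prodChild Px Py j Bx By ℓ₁) (prodChild Px Py j Bx By ℓ₂) x) =
      fun x =>
        Real.sqrt ((volume (prodChild Px Py j Bx By ℓ₂)).toReal / (volume (Bx ×ˢ By)).toReal) *
          (f x * gammaFn (prodChild Px Py j Bx By ℓ₁) x) -
        Real.sqrt ((volume (prodChild Px Py j Bx By ℓ₁)).toReal / (volume (Bx ×ˢ By)).toReal) *
          (f x * gammaFn (prodChild Px Py j Bx By ℓ₂) x) := by
    funext x
    unfold psiFn
    ring
  unfold coefA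
  rw [heq, MeasureTheory.integral_sub ((integrable_mul_gamma f hm₁).const_mul _)
    ((integrable_mul_gamma f hm₂).const_mul _), MeasureTheory.integral_const_mul,
    MeasureTheory.integral_const_mul]

/-- Per-block energy identity. -/
lemma block_energy (hj : j < J) (hBx : Bx ∈ Px.part j) (hBy : By ∈ Py.part j) :
    ∑ ℓ₂ ∈ Finset.range (Px.numChild j Bx * Py.numChild j By), ∑ ℓ₁ ∈ Finset.range ℓ₂,
      (∫ x, f x * psiFn (Bx ×ˢ By) (prodChild Px Py j Bx By ℓ₁) (prodChild Px Py j Bx By ℓ₂) x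
          ∂μ2) ^ 2
      = (∑ ℓ ∈ Finset.range (Px.numChild j Bx * Py.numChild j By),
          coefA f (prodChild Px Py j Bx By ℓ) ^ 2) - coefA f (Bx ×ˢ By) ^ 2 := by
  have hstep : ∀ ℓ₂ ∈ Finset.range (Px.numChild j Bx * Py.numChild j By),
      ∑ ℓ₁ ∈ Finset.range ℓ₂,
        (∫ x, f x * psiFn (Bx ×ˢ By) (prodChild Px Py j Bx By ℓ₁) (prodChild Px Py j Bx By ℓ₂) x
            ∂μ2) ^ 2
      = ∑ ℓ₁ ∈ Finset.range ℓ₂,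
        (Real.sqrt ((volume (prodChild Px Py j Bx By ℓ₂)).toReal / (volume (Bx ×ˢ By)).toReal) *
            coefA f (prodChild Px Py j Bx By ℓ₁) -
          Real.sqrt ((volume (prodChild Px Py j Bx By ℓ₁)).toReal / (volume (Bx ×ˢ By)).toReal) *
            coefA f (prodChild Px Py j Bx By ℓ₂)) ^ 2 := by
    intro ℓ₂ hℓ₂
    rw [Finset.mem_range] at hℓ₂
    refine Finset.sum_congr rfl fun ℓ₁ hℓ₁ => ?_
    rw [Finset.mem_range] at hℓ₁
    rw [coef_psi Px Py f hj hBx hBy (lt_trans hℓ₁ hℓ₂) hℓ₂]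
  rw [Finset.sum_congr rfl hstep,
    lagrange (Px.numChild j Bx * Py.numChild j By)
      (fun ℓ => Real.sqrt ((volume (prodChild Px Py j Bx By ℓ)).toReal /
        (volume (Bx ×ˢ By)).toReal))
      (fun ℓ => coefA f (prodChild Px Py j Bx By ℓ)),
    sum_b_eq_one Px Py hj hBx hBy, sum_sqrtb_coefA Px Py f hj hBx hBy, one_mul]

/-- Per-level step. -/
lemma level_step {j : ℕ} (hj : j < J) :
    ∑ Bx ∈ Px.part (j + 1), ∑ By ∈ Py.part (j + 1), coefA f (Bx ×ˢ By) ^ 2 =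
      (∑ Bx ∈ Px.part j, ∑ By ∈ Py.part j, coefA f (Bx ×ˢ By) ^ 2) +
        ∑ Bx ∈ Px.part j, ∑ By ∈ Py.part j,
          ∑ ℓ₂ ∈ Finset.range (Px.numChild j Bx * Py.numChild j By), ∑ ℓ₁ ∈ Finset.range ℓ₂,
            (∫ x, f x *
              psiFn (Bx ×ˢ By) (prodChild Px Py j Bx By ℓ₁) (prodChild Px Py j Bx By ℓ₂) x
                ∂μ2) ^ 2 := by
  have key : ∀ Bx ∈ Px.part j, ∀ By ∈ Py.part j,
      ∑ ℓ ∈ Finset.range (Px.numChild j Bx * Py.numChild j By),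
        coefA f (prodChild Px Py j Bx By ℓ) ^ 2
      = coefA f (Bx ×ˢ By) ^ 2 +
        ∑ ℓ₂ ∈ Finset.range (Px.numChild j Bx * Py.numChild j By), ∑ ℓ₁ ∈ Finset.range ℓ₂,
          (∫ x, f x *
            psiFn (Bx ×ˢ By) (prodChild Px Py j Bx By ℓ₁) (prodChild Px Py j Bx By ℓ₂) x
              ∂μ2) ^ 2 := by
    intro Bx hBx By hBy
    rw [block_energy Px Py f hj hBx hBy]
    ring
  have lhs_eq : ∑ Bx ∈ Px.part (j + 1), ∑ By ∈ Py.part (j + 1), coefA f (Bx ×ˢ By) ^ 2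
      = ∑ Bx ∈ Px.part j, ∑ By ∈ Py.part j,
          ∑ ℓ ∈ Finset.range (Px.numChild j Bx * Py.numChild j By),
            coefA f (prodChild Px Py j Bx By ℓ) ^ 2 := by
    rw [← sum_children Px hj (fun Bx' => ∑ By' ∈ Py.part (j + 1), coefA f (Bx' ×ˢ By') ^ 2)]
    refine Finset.sum_congr rfl fun Bx hBx => ?_
    rw [Finset.sum_congr rfl (fun i (_ : i ∈ Finset.range (Px.numChild j Bx)) =>
      (sum_children Py hj (fun By' => coefA f (Px.child j Bx i ×ˢ By') ^ 2)).symm)]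
    rw [Finset.sum_comm]
    refine Finset.sum_congr rfl fun By hBy => ?_
    exact (sum_range_mul_divmod (Px.numChild j Bx) (Py.numChild j By)
      (fun i k => coefA f (Px.child j Bx i ×ˢ Py.child j By k) ^ 2)).symm
  rw [lhs_eq, ← Finset.sum_add_distrib]
  refine Finset.sum_congr rfl fun Bx hBx => ?_
  rw [← Finset.sum_add_distrib]
  exact Finset.sum_congr rfl fun By hBy => key Bx hBx By hBy

/-- Telescoping. -/
lemma telescope (n : ℕ) (hn : n ≤ J) :
    ∑ Bx ∈ Px.part n, ∑ By ∈ Py.part n, coefA f (Bx ×ˢ By) ^ 2 =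
      coefA f Sq ^ 2 +
        ∑ j ∈ Finset.range n, ∑ Bx ∈ Px.part j, ∑ By ∈ Py.part j,
          ∑ ℓ₂ ∈ Finset.range (Px.numChild j Bx * Py.numChild j By), ∑ ℓ₁ ∈ Finset.range ℓ₂,
            (∫ x, f x *
              psiFn (Bx ×ˢ By) (prodChild Px Py j Bx By ℓ₁) (prodChild Px Py j Bx By ℓ₂) x
                ∂μ2) ^ 2 := by
  induction n with
  | zero =>
    rw [Px.root, Py.root, Finset.sum_singleton, Finset.sum_singleton]
    simp
  | succ n ih =>
    have hn' : n < J := hn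
    rw [level_step Px Py f hn', ih hn'.le, Finset.sum_range_succ]
    ring

/-- Representation of `f` in the span. -/
lemma repr_span
    (hf : f ∈ Submodule.span ℝ
      {g : Lp ℝ 2 μ2 | ∃ Bx ∈ Px.part J, ∃ By ∈ Py.part J,
          (g : ℝ × ℝ → ℝ) =ᵐ[μ2] (Bx ×ˢ By).indicator fun _ => (1 : ℝ)}) :
    (f : ℝ × ℝ → ℝ) =ᵐ[μ2] fun x =>
      ∑ Bx ∈ Px.part J, ∑ By ∈ Py.part J, coefA f (Bx ×ˢ By) * gammaFn (Bx ×ˢ By) x := by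
  induction hf using Submodule.span_induction with
  | mem g hg =>
    classical
    obtain ⟨Bx₀, hBx₀, By₀, hBy₀, hg⟩ := hg
    have hB₀ : Good (Bx₀ ×ˢ By₀) := good_block Px Py le_rfl hBx₀ hBy₀
    have hvpos : 0 < (volume (Bx₀ ×ˢ By₀)).toReal := hB₀.toReal_pos
    have hsne : Real.sqrt (volume (Bx₀ ×ˢ By₀)).toReal ≠ 0 := (Real.sqrt_pos.mpr hvpos).ne'
    have hcoef : ∀ Bx ∈ Px.part J, ∀ By ∈ Py.part J,
        coefA g (Bx ×ˢ By) =
          if Bx = Bx₀ ∧ By = By₀ then Real.sqrt (volume (Bx₀ ×ˢ By₀)).toReal else 0 := by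
      intro Bx hBx By hBy
      have hB : Good (Bx ×ˢ By) := good_block Px Py le_rfl hBx hBy
      have h1 : coefA g (Bx ×ˢ By) =
          ∫ x, (Bx₀ ×ˢ By₀).indicator (fun _ => (1 : ℝ)) x * gammaFn (Bx ×ˢ By) x ∂μ2 := by
        refine MeasureTheory.integral_congr_ae ?_
        filter_upwards [hg] with x hx
        rw [hx]
      have h2 : ∀ x, (Bx₀ ×ˢ By₀).indicator (fun _ => (1 : ℝ)) x * gammaFn (Bx ×ˢ By) x
          = (Real.sqrt (volume (Bx ×ˢ By)).toReal)⁻¹ *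
              ((Bx₀ ×ˢ By₀) ∩ (Bx ×ˢ By)).indicator (fun _ => (1 : ℝ)) x := by
        intro x
        rw [gammaFn_eq]
        by_cases hx1 : x ∈ (Bx₀ ×ˢ By₀ : Set (ℝ × ℝ)) <;>
          by_cases hx2 : x ∈ (Bx ×ˢ By : Set (ℝ × ℝ)) <;>
          simp [Set.indicator_apply, hx1, hx2, Set.mem_inter_iff]
      rw [h1, MeasureTheory.integral_congr_ae (Filter.Eventually.of_forall h2),
        MeasureTheory.integral_const_mul,
        MeasureTheory.integral_indicator_const (1 : ℝ) (hB₀.meas.inter hB.meas),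
        smul_eq_mul, mul_one]
      by_cases hBeq : Bx = Bx₀ ∧ By = By₀
      · obtain ⟨h1', h2'⟩ := hBeq
        subst h1'; subst h2'
        rw [Set.inter_self, measureReal_def, hB.mu2_eq, if_pos ⟨rfl, rfl⟩]
        rw [inv_mul_eq_div, div_eq_iff hsne, Real.mul_self_sqrt hvpos.le]
      · rw [if_neg hBeq]
        have hnull : volume ((Bx₀ ×ˢ By₀) ∩ (Bx ×ˢ By)) = 0 := by
          rw [Set.prod_inter_prod, vol_prod]
          rcases not_and_or.mp hBeq with h | h
          · rw [Px.null_inter J le_rfl Bx₀ hBx₀ Bx hBx (fun he => h he.symm), zero_mul]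
          · rw [Py.null_inter J le_rfl By₀ hBy₀ By hBy (fun he => h he.symm), mul_zero]
        have hle : μ2 ((Bx₀ ×ˢ By₀) ∩ (Bx ×ˢ By)) = 0 := by
          refine le_antisymm ?_ zero_le
          refine le_trans (Measure.restrict_le_self _) ?_
          rw [hnull]
        rw [measureReal_def, hle]
        simp
    have hsum : ∀ x,
        (∑ Bx ∈ Px.part J, ∑ By ∈ Py.part J, coefA g (Bx ×ˢ By) * gammaFn (Bx ×ˢ By) x)
          = (Bx₀ ×ˢ By₀).indicator (fun _ => (1 : ℝ)) x := by
      intro x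
      have houter : (∑ Bx ∈ Px.part J, ∑ By ∈ Py.part J,
          coefA g (Bx ×ˢ By) * gammaFn (Bx ×ˢ By) x)
          = ∑ By ∈ Py.part J, coefA g (Bx₀ ×ˢ By) * gammaFn (Bx₀ ×ˢ By) x := by
        refine Finset.sum_eq_single Bx₀ ?_ ?_
        · intro Bx hBx hne
          refine Finset.sum_eq_zero fun By hBy => ?_
          rw [hcoef Bx hBx By hBy, if_neg (fun he => hne he.1), zero_mul]
        · intro h; exact absurd hBx₀ h
      have hinner : (∑ By ∈ Py.part J, coefA g (Bx₀ ×ˢ By) * gammaFn (Bx₀ ×ˢ By) x)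
          = coefA g (Bx₀ ×ˢ By₀) * gammaFn (Bx₀ ×ˢ By₀) x := by
        refine Finset.sum_eq_single By₀ ?_ ?_
        · intro By hBy hne
          rw [hcoef Bx₀ hBx₀ By hBy, if_neg (fun he => hne he.2), zero_mul]
        · intro h; exact absurd hBy₀ h
      rw [houter, hinner, hcoef Bx₀ hBx₀ By₀ hBy₀, if_pos ⟨rfl, rfl⟩, gammaFn_eq,
        ← mul_assoc, mul_inv_cancel₀ hsne, one_mul]
    exact hg.trans (Filter.Eventually.of_forall fun x => (hsum x).symm)
  | zero =>
    simp only [coefA_zero, zero_mul, Finset.sum_const_zero]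
    exact Lp.coeFn_zero ℝ 2 μ2
  | add g h hgmem hhmem ihg ihh =>
    filter_upwards [Lp.coeFn_add g h, ihg, ihh] with x h1 h2 h3
    rw [h1, Pi.add_apply, h2, h3, ← Finset.sum_add_distrib]
    refine Finset.sum_congr rfl fun Bx hBx => ?_
    rw [← Finset.sum_add_distrib]
    refine Finset.sum_congr rfl fun By hBy => ?_
    rw [coefA_add g h (good_block Px Py le_rfl hBx hBy).meas]
    ring
  | smul c g hgmem ihg =>
    filter_upwards [Lp.coeFn_smul c g, ihg] with x h1 h2
    rw [h1, Pi.smul_apply, smul_eq_mul, h2, Finset.mul_sum]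
    refine Finset.sum_congr rfl fun Bx hBx => ?_
    rw [Finset.mul_sum]
    refine Finset.sum_congr rfl fun By hBy => ?_
    rw [coefA_smul c g]
    ring

/-- Parseval at the finest level. -/
lemma norm_sq_eq
    (hf : f ∈ Submodule.span ℝ
      {g : Lp ℝ 2 μ2 | ∃ Bx ∈ Px.part J, ∃ By ∈ Py.part J,
          (g : ℝ × ℝ → ℝ) =ᵐ[μ2] (Bx ×ˢ By).indicator fun _ => (1 : ℝ)}) :
    ‖f‖ ^ 2 = ∑ Bx ∈ Px.part J, ∑ By ∈ Py.part J, coefA f (Bx ×ˢ By) ^ 2 := by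
  have hrepr := repr_span Px Py f hf
  have h1 : ‖f‖ ^ 2 = ∫ x, f x * f x ∂μ2 := by
    rw [← real_inner_self_eq_norm_sq f, L2.inner_def]
    refine MeasureTheory.integral_congr_ae (Filter.Eventually.of_forall fun x => ?_)
    simp [RCLike.inner_apply]
    ring
  have hflat : ∀ x, f x * (∑ Bx ∈ Px.part J, ∑ By ∈ Py.part J,
      coefA f (Bx ×ˢ By) * gammaFn (Bx ×ˢ By) x)
      = ∑ p ∈ Px.part J ×ˢ Py.part J,
          coefA f (p.1 ×ˢ p.2) * (f x * gammaFn (p.1 ×ˢ p.2) x) := by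
    intro x
    rw [Finset.sum_product, Finset.mul_sum]
    refine Finset.sum_congr rfl fun Bx _ => ?_
    rw [Finset.mul_sum]
    refine Finset.sum_congr rfl fun By _ => ?_
    ring
  have h2 : ∫ x, f x * f x ∂μ2
      = ∑ p ∈ Px.part J ×ˢ Py.part J, coefA f (p.1 ×ˢ p.2) ^ 2 := by
    calc ∫ x, f x * f x ∂μ2
        = ∫ x, ∑ p ∈ Px.part J ×ˢ Py.part J,
            coefA f (p.1 ×ˢ p.2) * (f x * gammaFn (p.1 ×ˢ p.2) x) ∂μ2 := by
          refine MeasureTheory.integral_congr_ae ?_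
          filter_upwards [hrepr] with x hx
          rw [← hflat x, ← hx]
      _ = ∑ p ∈ Px.part J ×ˢ Py.part J,
            ∫ x, coefA f (p.1 ×ˢ p.2) * (f x * gammaFn (p.1 ×ˢ p.2) x) ∂μ2 := by
          refine integral_finset_sum _ fun p hp => ?_
          have hp' := Finset.mem_product.mp hp
          exact (integrable_mul_gamma f (good_block Px Py le_rfl hp'.1 hp'.2).meas).const_mul _
      _ = ∑ p ∈ Px.part J ×ˢ Py.part J, coefA f (p.1 ×ˢ p.2) ^ 2 := by
          refine Finset.sum_congr rfl fun p hp => ?_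
          rw [MeasureTheory.integral_const_mul]
          rw [pow_two]
          rfl
  rw [h1, h2, Finset.sum_product]

end TwoD

end TFAux

/-- given hierarchical partitions `{I_j^x}` and `{I_j^y}` of `[0,1]` up to
level `J`, with `B_j = I_j^x ⊗ I_j^y` the collections of product blocks, the cut-off system
`X({B_j}_{j=0}^J) = {φ₀} ∪ ⋃_{j<J} ⋃_{B∈B_j} Ψ_{j,B}` is a tight frame with frame constant 1
for `V_J = span{χ_B : B ∈ B_J} ⊆ L²([0,1]²)`. -/
theorem product_cutoff_system_tight_frame
    {J : ℕ} (Px Py : IntervalPartitionUpTo J)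
    (f : Lp ℝ 2 (volume.restrict (Set.Icc (0 : ℝ) 1 ×ˢ Set.Icc (0 : ℝ) 1)))
    (hf : f ∈ Submodule.span ℝ
      {g : Lp ℝ 2 (volume.restrict (Set.Icc (0 : ℝ) 1 ×ˢ Set.Icc (0 : ℝ) 1)) |
        ∃ Bx ∈ Px.part J, ∃ By ∈ Py.part J,
          (g : ℝ × ℝ → ℝ) =ᵐ[volume.restrict (Set.Icc (0 : ℝ) 1 ×ˢ Set.Icc (0 : ℝ) 1)]
            (Bx ×ˢ By).indicator fun _ => (1 : ℝ)}) :
    ‖f‖ ^ 2 =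
      (∫ x, f x * (Set.Icc (0 : ℝ) 1 ×ˢ Set.Icc (0 : ℝ) 1).indicator (fun _ => (1 : ℝ)) x
          ∂(volume.restrict (Set.Icc (0 : ℝ) 1 ×ˢ Set.Icc (0 : ℝ) 1))) ^ 2 +
        ∑ j ∈ Finset.range J, ∑ Bx ∈ Px.part j, ∑ By ∈ Py.part j,
          ∑ ℓ₂ ∈ Finset.range (Px.numChild j Bx * Py.numChild j By), ∑ ℓ₁ ∈ Finset.range ℓ₂,
            (∫ x, f x * psiFn (Bx ×ˢ By) (prodChild Px Py j Bx By ℓ₁) (prodChild Px Py j Bx By ℓ₂) x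
              ∂(volume.restrict (Set.Icc (0 : ℝ) 1 ×ˢ Set.Icc (0 : ℝ) 1))) ^ 2 := by
  have hbase := TFAux.norm_sq_eq Px Py f hf
  have htel := TFAux.telescope Px Py f J le_rfl
  have hphi : TFAux.coefI f (Set.Icc (0 : ℝ) 1 ×ˢ Set.Icc (0 : ℝ) 1)
      = ∫ x, f x * (Set.Icc (0 : ℝ) 1 ×ˢ Set.Icc (0 : ℝ) 1).indicator (fun _ => (1 : ℝ)) x
          ∂(volume.restrict (Set.Icc (0 : ℝ) 1 ×ˢ Set.Icc (0 : ℝ) 1)) := rfl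
  have hA : TFAux.coefA f (Set.Icc (0 : ℝ) 1 ×ˢ Set.Icc (0 : ℝ) 1)
      = TFAux.coefI f (Set.Icc (0 : ℝ) 1 ×ˢ Set.Icc (0 : ℝ) 1) := by
    rw [TFAux.coefA_eq, TFAux.vol_Sq]
    norm_num
  rw [hbase, htel, hA]
  rfl
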